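/- Finiteness of the k-means discontinuity set: for fixed n and k, as the entry X_{i,j} varies over ℝ with all other entries of X fixed, the number of points at which the k-means fitted value M(X)_{i,j} is discontinuous is bounded by a constant A depending only on n and k (not on i, j, or the fixed entries), since there are only finitely many distinct partitions of n points into at most k clusters. -/

import Mathlib

open Finset

/-- The within-cluster sum of squares of a clustering `(c, μ)` of the rows
`Y` of a data matrix. -/
noncomputable def kmObj (n d k : ℕ) (Y : Fin n → EuclideanSpace ℝ (Fin d))
    (c : Fin n → Fin k) (μ : Fin k → EuclideanSpace ℝ (Fin d)) : ℝ :=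
  ∑ m : Fin n, ‖Y m - μ (c m)‖ ^ 2

/-- The data matrix `X` with entry `(i, j)` replaced by `t`. -/
noncomputable def perturbEntry (n d : ℕ) (X : Fin n → EuclideanSpace ℝ (Fin d))
    (i : Fin n) (j : Fin d) (t : ℝ) : Fin n → EuclideanSpace ℝ (Fin d) :=
  fun m => X m + (if m = i then (t - X i j) • EuclideanSpace.single j (1 : ℝ) else 0)

namespace KMAux

open scoped RealInnerProductSpace


/-- test small lemmas first -/
lemma const_of_sq_bound (h : ℝ → ℝ) (C : ℝ)
    (hb : ∀ s t : ℝ, |h t - h s| ≤ C * (t - s) ^ 2) : ∀ s t : ℝ, h s = h t := by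
  have hC : 0 ≤ C := by
    have := hb 0 1
    have h0 : (0:ℝ) ≤ |h 1 - h 0| := abs_nonneg _
    nlinarith
  have hd : ∀ x : ℝ, HasDerivAt h 0 x := by
    intro x
    rw [hasDerivAt_iff_isLittleO]
    rw [Asymptotics.isLittleO_iff]
    intro ε hε
    filter_upwards [Metric.closedBall_mem_nhds x (show (0:ℝ) < ε / (C + 1) by positivity)]
      with t ht
    have ht' : |t - x| ≤ ε / (C + 1) := by
      simpa [Real.dist_eq] using ht
    have hb' := hb x t
    have habs : 0 ≤ |t - x| := abs_nonneg _
    have h1 : ‖h t - h x - (t - x) • (0:ℝ)‖ = |h t - h x| := by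
      simp [Real.norm_eq_abs]
    rw [h1]
    have h2 : ‖t - x‖ = |t - x| := rfl
    rw [h2]
    have h3 : (t - x) ^ 2 = |t - x| * |t - x| := by
      rw [← sq_abs]; ring
    have h4 : C * |t - x| ≤ ε := by
      rcases eq_or_lt_of_le habs with h5 | h5
      · nlinarith
      · have : C * |t - x| ≤ C * (ε / (C+1)) := by nlinarith
        have h6 : C * (ε / (C+1)) ≤ ε := by
          rw [mul_comm, div_mul_eq_mul_div, div_le_iff₀ (by positivity)]
          nlinarith
        linarith
    calc |h t - h x| ≤ C * (t - x) ^ 2 := hb x t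
      _ = (C * |t - x|) * |t - x| := by rw [h3]; ring
      _ ≤ ε * |t - x| := by nlinarith
  intro s t
  exact is_const_of_deriv_eq_zero (fun x => (hd x).differentiableAt)
    (fun x => (hd x).deriv) s t

lemma quad_zero_coeffs (α β γ : ℝ) (h : ∀ t : ℝ, α * t ^ 2 + β * t + γ = 0) :
    α = 0 ∧ β = 0 ∧ γ = 0 := by
  have h0 := h 0
  have h1 := h 1
  have h2 := h (-1)
  constructor
  · nlinarith
  constructor
  · nlinarith
  · nlinarith

lemma quad_roots_finite (α β γ : ℝ) (h : ¬(α = 0 ∧ β = 0 ∧ γ = 0)) :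
    {t : ℝ | α * t ^ 2 + β * t + γ = 0}.Finite ∧
      {t : ℝ | α * t ^ 2 + β * t + γ = 0}.ncard ≤ 2 := by
  classical
  set P : Polynomial ℝ := Polynomial.C α * Polynomial.X ^ 2 + Polynomial.C β * Polynomial.X
    + Polynomial.C γ with hP
  have heval : ∀ t : ℝ, P.eval t = α * t ^ 2 + β * t + γ := by
    intro t; simp [hP]
  have hPne : P ≠ 0 := by
    intro h0
    apply h
    refine ⟨?_, ?_, ?_⟩
    · have := congrArg (fun q => Polynomial.coeff q 2) h0
      simpa [hP, Polynomial.coeff_add, Polynomial.coeff_C_mul, Polynomial.coeff_X_pow,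
        Polynomial.coeff_X, Polynomial.coeff_C] using this
    · have := congrArg (fun q => Polynomial.coeff q 1) h0
      simpa [hP, Polynomial.coeff_add, Polynomial.coeff_C_mul, Polynomial.coeff_X_pow,
        Polynomial.coeff_X, Polynomial.coeff_C] using this
    · have := congrArg (fun q => Polynomial.coeff q 0) h0
      simpa [hP, Polynomial.coeff_add, Polynomial.coeff_C_mul, Polynomial.coeff_X_pow,
        Polynomial.coeff_X, Polynomial.coeff_C] using this
  have hset : {t : ℝ | α * t ^ 2 + β * t + γ = 0} = {t : ℝ | P.IsRoot t} := by
    ext t; simp [Polynomial.IsRoot, heval]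
  rw [hset]
  refine ⟨Polynomial.finite_setOf_isRoot hPne, ?_⟩
  have hsub : {t : ℝ | P.IsRoot t} = ↑P.roots.toFinset := by
    ext t
    simp [Polynomial.mem_roots, hPne, Polynomial.IsRoot]
  rw [hsub, Set.ncard_coe_finset]
  have hdeg : P.natDegree ≤ 2 := by
    apply le_trans (Polynomial.natDegree_add_le _ _)
    simp only [max_le_iff]
    constructor
    · apply le_trans (Polynomial.natDegree_add_le _ _)
      simp only [max_le_iff]
      constructor
      · exact le_trans (Polynomial.natDegree_C_mul_le _ _) (by simp)
      · exact le_trans (Polynomial.natDegree_C_mul_le _ _) (by simp)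
    · simp
  calc P.roots.toFinset.card ≤ Multiset.card P.roots := P.roots.toFinset_card_le
    _ ≤ P.natDegree := P.card_roots' 
    _ ≤ 2 := hdeg

lemma ncard_iUnion_le {ι : Type*} [Fintype ι] (S : ι → Set ℝ) (B : ℕ)
    (hfin : ∀ i, (S i).Finite) (hcard : ∀ i, (S i).ncard ≤ B) :
    (⋃ i, S i).Finite ∧ (⋃ i, S i).ncard ≤ Fintype.card ι * B := by
  classical
  have hU : (⋃ i, S i) = ↑(Finset.univ.biUnion (fun i => (hfin i).toFinset)) := by
    ext x
    simp [Set.Finite.mem_toFinset]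
  rw [hU]
  refine ⟨(Finset.univ.biUnion (fun i => (hfin i).toFinset)).finite_toSet, ?_⟩
  rw [Set.ncard_coe_finset]
  calc (Finset.univ.biUnion (fun i => (hfin i).toFinset)).card
      ≤ ∑ i : ι, ((hfin i).toFinset).card := Finset.card_biUnion_le
    _ ≤ ∑ _i : ι, B := by
        apply Finset.sum_le_sum
        intro i _
        rw [← Set.ncard_eq_toFinset_card (S i) (hfin i)]
        exact hcard i
    _ = Fintype.card ι * B := by rw [Finset.sum_const, Finset.card_univ, smul_eq_mul]



variable {n d k : ℕ}

/-- The centroid of cluster `l`. -/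
noncomputable def cent (n d k : ℕ) (Y : Fin n → EuclideanSpace ℝ (Fin d))
    (c : Fin n → Fin k) (l : Fin k) : EuclideanSpace ℝ (Fin d) :=
  (((Finset.univ.filter (fun m => c m = l)).card : ℝ))⁻¹ •
    ∑ m ∈ Finset.univ.filter (fun m => c m = l), Y m

lemma sum_fiber (Y : Fin n → EuclideanSpace ℝ (Fin d)) (c : Fin n → Fin k) (l : Fin k) :
    ∑ m ∈ Finset.univ.filter (fun m => c m = l), Y m
      = (((Finset.univ.filter (fun m => c m = l)).card : ℝ)) • cent n d k Y c l := by
  classical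
  rcases eq_or_ne (Finset.univ.filter (fun m => c m = l)).card 0 with h | h
  · rw [Finset.card_eq_zero] at h
    simp [h, cent]
  · rw [cent, smul_inv_smul₀]
    exact_mod_cast h

/-- Decomposition of the objective around the centroids. -/
lemma km_decomp (Y : Fin n → EuclideanSpace ℝ (Fin d)) (c : Fin n → Fin k)
    (μ : Fin k → EuclideanSpace ℝ (Fin d)) :
    kmObj n d k Y c μ = kmObj n d k Y c (cent n d k Y c)
      + ∑ m : Fin n, ‖cent n d k Y c (c m) - μ (c m)‖ ^ 2 := by
  classical
  have point : ∀ m : Fin n, ‖Y m - μ (c m)‖ ^ 2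
      = ‖Y m - cent n d k Y c (c m)‖ ^ 2
        + (2 * ⟪Y m - cent n d k Y c (c m), cent n d k Y c (c m) - μ (c m)⟫
          + ‖cent n d k Y c (c m) - μ (c m)‖ ^ 2) := by
    intro m
    have h := norm_add_sq_real (Y m - cent n d k Y c (c m)) (cent n d k Y c (c m) - μ (c m))
    rw [sub_add_sub_cancel] at h
    linarith
  have cross : ∑ m : Fin n,
      ⟪Y m - cent n d k Y c (c m), cent n d k Y c (c m) - μ (c m)⟫ = 0 := by
    rw [← Finset.sum_fiberwise Finset.univ c
      (fun m => ⟪Y m - cent n d k Y c (c m), cent n d k Y c (c m) - μ (c m)⟫)]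
    apply Finset.sum_eq_zero
    intro l _
    have : ∀ m ∈ Finset.univ.filter (fun m => c m = l),
        ⟪Y m - cent n d k Y c (c m), cent n d k Y c (c m) - μ (c m)⟫
          = ⟪Y m - cent n d k Y c l, cent n d k Y c l - μ l⟫ := by
      intro m hm
      rw [Finset.mem_filter] at hm
      rw [hm.2]
    rw [Finset.sum_congr rfl this, ← sum_inner]
    have hz : (∑ m ∈ Finset.univ.filter (fun m => c m = l), (Y m - cent n d k Y c l)) = 0 := by
      rw [Finset.sum_sub_distrib, Finset.sum_const, sum_fiber Y c l, ← Nat.cast_smul_eq_nsmul ℝ,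
        sub_self]
    rw [hz, inner_zero_left]
  unfold kmObj
  rw [Finset.sum_congr rfl (fun m _ => point m)]
  rw [Finset.sum_add_distrib, Finset.sum_add_distrib, ← Finset.mul_sum, cross]
  ring

variable (X : Fin n → EuclideanSpace ℝ (Fin d)) (i : Fin n) (j : Fin d)

lemma perturb_apply_ne (t : ℝ) (m : Fin n) (hm : m ≠ i) :
    perturbEntry n d X i j t m = X m := by
  simp [perturbEntry, hm]

lemma perturb_apply_self (t : ℝ) :
    perturbEntry n d X i j t i = X i + (t - X i j) • EuclideanSpace.single j (1 : ℝ) := by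
  simp [perturbEntry]

lemma perturb_coord (t : ℝ) : perturbEntry n d X i j t i j = t := by
  rw [perturb_apply_self]
  simp [PiLp.add_apply, PiLp.smul_apply, EuclideanSpace.single_apply]


/-- Changing the varying entry shifts the objective by an explicit quadratic amount. -/
lemma km_shift (c : Fin n → Fin k) (μ : Fin k → EuclideanSpace ℝ (Fin d)) (t t' : ℝ) :
    kmObj n d k (perturbEntry n d X i j t') c μ
      = kmObj n d k (perturbEntry n d X i j t) c μ
        + (t' - t) * (t + t' - 2 * μ (c i) j) := by
  classical
  unfold kmObj
  have key : ∀ m : Fin n, ‖perturbEntry n d X i j t' m - μ (c m)‖ ^ 2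
      - ‖perturbEntry n d X i j t m - μ (c m)‖ ^ 2
      = if m = i then (t' - t) * (t + t' - 2 * μ (c i) j) else 0 := by
    intro m
    rcases eq_or_ne m i with hm | hm
    · subst hm
      simp only [if_pos rfl]
      have hdec : perturbEntry n d X m j t' m
          = (perturbEntry n d X m j t m - μ (c m)) + μ (c m)
            + (t' - t) • EuclideanSpace.single j (1 : ℝ) := by
        rw [perturb_apply_self, perturb_apply_self, sub_add_cancel]
        module
      have h2 : perturbEntry n d X m j t' m - μ (c m)
          = (perturbEntry n d X m j t m - μ (c m))
            + (t' - t) • EuclideanSpace.single j (1 : ℝ) := by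
        rw [hdec]; abel
      rw [h2, norm_add_sq_real]
      rw [real_inner_smul_right, norm_smul]
      have hip : ⟪perturbEntry n d X m j t m - μ (c m), EuclideanSpace.single j (1 : ℝ)⟫
          = t - μ (c m) j := by
        have hh := EuclideanSpace.inner_single_right (𝕜 := ℝ) j (1 : ℝ)
          (perturbEntry n d X m j t m - μ (c m))
        rw [hh]
        have hcoord : (perturbEntry n d X m j t m - μ (c m)) j
            = perturbEntry n d X m j t m j - μ (c m) j := rfl
        rw [hcoord, perturb_coord]
        simp
      rw [hip]
      simp only [EuclideanSpace.norm_single, Real.norm_eq_abs, norm_one, mul_one, sq_abs,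
        if_pos, ite_true]
      ring_nf
    · simp only [if_neg hm]
      rw [perturb_apply_ne X i j t' m hm, perturb_apply_ne X i j t m hm]
      ring
  have : ∑ m : Fin n, ‖perturbEntry n d X i j t' m - μ (c m)‖ ^ 2
      = ∑ m : Fin n, (‖perturbEntry n d X i j t m - μ (c m)‖ ^ 2
        + if m = i then (t' - t) * (t + t' - 2 * μ (c i) j) else 0) := by
    apply Finset.sum_congr rfl
    intro m _
    have := key m
    linarith [key m]
  rw [this, Finset.sum_add_distrib, Finset.sum_ite_eq' Finset.univ i
    (fun _ => (t' - t) * (t + t' - 2 * μ (c i) j))]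
  simp

/-- The objective of the clustering `c` with optimal centroids, as a function of `t`. -/
noncomputable def gfun (n d k : ℕ) (X : Fin n → EuclideanSpace ℝ (Fin d)) (i : Fin n)
    (j : Fin d) (c : Fin n → Fin k) (t : ℝ) : ℝ :=
  kmObj n d k (perturbEntry n d X i j t) c
    (cent n d k (perturbEntry n d X i j t) c)

/-- The `j`-th coordinate of the centroid of the cluster of `i`, as a function of `t`. -/
noncomputable def afun (n d k : ℕ) (X : Fin n → EuclideanSpace ℝ (Fin d)) (i : Fin n)
    (j : Fin d) (c : Fin n → Fin k) (t : ℝ) : ℝ :=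
  cent n d k (perturbEntry n d X i j t) c (c i) j

lemma gfun_min (c : Fin n → Fin k) (μ : Fin k → EuclideanSpace ℝ (Fin d)) (t : ℝ) :
    gfun n d k X i j c t ≤ kmObj n d k (perturbEntry n d X i j t) c μ := by
  rw [km_decomp (perturbEntry n d X i j t) c μ]
  have : (0:ℝ) ≤ ∑ m : Fin n, ‖cent n d k (perturbEntry n d X i j t) c (c m) - μ (c m)‖ ^ 2 :=
    Finset.sum_nonneg fun m _ => by positivity
  unfold gfun
  linarith

/-- `afun` is affine in `t`, with slope the reciprocal of the cluster size. -/
lemma afun_affine (c : Fin n → Fin k) :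
    ∃ p q : ℝ, 0 < p ∧
      ∀ t : ℝ, afun n d k X i j c t = p * t + q := by
  classical
  set F := Finset.univ.filter (fun m => c m = c i) with hF
  have hiF : i ∈ F := by simp [hF]
  have hcard : 0 < F.card := Finset.card_pos.mpr ⟨i, hiF⟩
  refine ⟨((F.card : ℝ))⁻¹, ((F.card : ℝ))⁻¹ * ∑ m ∈ F.erase i, X m j, ?_, ?_⟩
  · positivity
  intro t
  unfold afun cent
  rw [← hF]
  have happ : ((((F.card : ℝ))⁻¹ • ∑ m ∈ F, perturbEntry n d X i j t m) : EuclideanSpace ℝ (Fin d)) j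
      = ((F.card : ℝ))⁻¹ * ((∑ m ∈ F, perturbEntry n d X i j t m) j) := rfl
  rw [happ]
  have hsum : ((∑ m ∈ F, perturbEntry n d X i j t m) j)
      = ∑ m ∈ F, perturbEntry n d X i j t m j := by
    exact map_sum (EuclideanSpace.proj j (𝕜 := ℝ)) (fun m => perturbEntry n d X i j t m) F
  rw [hsum, ← Finset.add_sum_erase F _ hiF, perturb_coord]
  have : ∀ m ∈ F.erase i, perturbEntry n d X i j t m j = X m j := by
    intro m hm
    rw [perturb_apply_ne X i j t m (Finset.ne_of_mem_erase hm)]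
  rw [Finset.sum_congr rfl this]
  ring


lemma gfun_envelope (c : Fin n → Fin k) (t t' : ℝ) :
    gfun n d k X i j c t' ≤ gfun n d k X i j c t
      + (t' - t) * (t + t' - 2 * afun n d k X i j c t) := by
  have h1 := gfun_min X i j c (cent n d k (perturbEntry n d X i j t) c) t'
  have h2 := km_shift X i j c (cent n d k (perturbEntry n d X i j t) c) t t'
  unfold gfun afun at *
  linarith

/-- `gfun` is an explicit quadratic whose coefficients determine the affine map `afun`. -/
lemma gfun_quadratic (c : Fin n → Fin k) :
    ∃ p q r : ℝ, 0 < p ∧ (∀ t, afun n d k X i j c t = p * t + q) ∧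
      ∀ t, gfun n d k X i j c t = (1 - p) * t ^ 2 - 2 * q * t + r := by
  obtain ⟨p, q, hp, ha⟩ := afun_affine X i j c
  set h : ℝ → ℝ := fun t => gfun n d k X i j c t - ((1 - p) * t ^ 2 - 2 * q * t) with hh
  have hb : ∀ s t : ℝ, |h t - h s| ≤ p * (t - s) ^ 2 := by
    intro s t
    have e1 := gfun_envelope X i j c s t
    have e2 := gfun_envelope X i j c t s
    rw [ha s] at e1
    rw [ha t] at e2
    rw [abs_le]
    constructor
    · simp only [hh]; nlinarith [e2]
    · simp only [hh]; nlinarith [e1]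
  have hconst := const_of_sq_bound h p hb
  refine ⟨p, q, h 0, hp, ha, ?_⟩
  intro t
  have h0 := hconst 0 t
  simp only [hh] at h0 ⊢
  linarith

end KMAux

/-- Finiteness of the k-means discontinuity set: as `X_{i,j}` varies over `ℝ`
with the other entries fixed, any selection `f` of the optimal k-means fitted
value `M(X)_{i,j}` has at most `A` discontinuity points, where `A` does not
depend on `i`, `j`, or the fixed entries. -/
theorem stmt10 (n d k : ℕ) :
    ∃ A : ℕ, ∀ (X : Fin n → EuclideanSpace ℝ (Fin d)) (i : Fin n) (j : Fin d)
      (f : ℝ → ℝ),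
      (∀ t : ℝ, ∃ (c : Fin n → Fin k) (μ : Fin k → EuclideanSpace ℝ (Fin d)),
        (∀ (c' : Fin n → Fin k) (μ' : Fin k → EuclideanSpace ℝ (Fin d)),
          kmObj n d k (perturbEntry n d X i j t) c μ ≤
            kmObj n d k (perturbEntry n d X i j t) c' μ') ∧
        (∀ (m : Fin n) (l : Fin k),
          ‖perturbEntry n d X i j t m - μ (c m)‖ ≤
            ‖perturbEntry n d X i j t m - μ l‖) ∧
        f t = μ (c i) j) →
      {t : ℝ | ¬ ContinuousAt f t}.Finite ∧
        {t : ℝ | ¬ ContinuousAt f t}.ncard ≤ A := by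
  classical
  refine ⟨Fintype.card ((Fin n → Fin k) × (Fin n → Fin k)) * 2, ?_⟩
  intro X i j f hf
  have hsel : ∀ t : ℝ, ∃ c : Fin n → Fin k,
      (∀ c', KMAux.gfun n d k X i j c t ≤ KMAux.gfun n d k X i j c' t) ∧
      f t = KMAux.afun n d k X i j c t := by
    intro t
    obtain ⟨c, μ, hopt, _, hft⟩ := hf t
    have hobj : kmObj n d k (perturbEntry n d X i j t) c μ = KMAux.gfun n d k X i j c t := by
      apply le_antisymm
      · exact hopt c (KMAux.cent n d k (perturbEntry n d X i j t) c)
      · exact KMAux.gfun_min X i j c μ t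
    refine ⟨c, ?_, ?_⟩
    · intro c'
      calc KMAux.gfun n d k X i j c t
          = kmObj n d k (perturbEntry n d X i j t) c μ := hobj.symm
        _ ≤ kmObj n d k (perturbEntry n d X i j t) c'
              (KMAux.cent n d k (perturbEntry n d X i j t) c') :=
            hopt c' _
        _ = KMAux.gfun n d k X i j c' t := rfl
    · have hdec := KMAux.km_decomp (perturbEntry n d X i j t) c μ
      have hzero : ∑ m : Fin n,
          ‖KMAux.cent n d k (perturbEntry n d X i j t) c (c m) - μ (c m)‖ ^ 2 = 0 := by
        unfold KMAux.gfun at hobj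
        linarith
      rw [Finset.sum_eq_zero_iff_of_nonneg (fun m _ => by positivity)] at hzero
      have hi := hzero i (Finset.mem_univ i)
      have hv : KMAux.cent n d k (perturbEntry n d X i j t) c (c i) = μ (c i) := by
        rw [pow_eq_zero_iff (by norm_num), norm_eq_zero, sub_eq_zero] at hi
        exact hi
      rw [hft]
      unfold KMAux.afun
      rw [hv]
  choose cm hmin hval using hsel
  choose P Q R hPpos hA hG using fun c => KMAux.gfun_quadratic X i j c
  set D : Set ℝ := {t | ∃ c c' : Fin n → Fin k,
      (P c, Q c, R c) ≠ (P c', Q c', R c') ∧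
      KMAux.gfun n d k X i j c t = KMAux.gfun n d k X i j c' t} with hD
  set S : ((Fin n → Fin k) × (Fin n → Fin k)) → Set ℝ := fun pr =>
    {t | (P pr.1, Q pr.1, R pr.1) ≠ (P pr.2, Q pr.2, R pr.2) ∧
      KMAux.gfun n d k X i j pr.1 t = KMAux.gfun n d k X i j pr.2 t} with hS
  have hSgood : ∀ pr, (S pr).Finite ∧ (S pr).ncard ≤ 2 := by
    intro pr
    by_cases hne : (P pr.1, Q pr.1, R pr.1) = (P pr.2, Q pr.2, R pr.2)
    · have : S pr = ∅ := Set.eq_empty_iff_forall_notMem.mpr (fun t ht => ht.1 hne)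
      rw [this]
      simp
    · have hSeq : S pr = {t : ℝ | (P pr.2 - P pr.1) * t ^ 2
          + (2 * Q pr.2 - 2 * Q pr.1) * t + (R pr.1 - R pr.2) = 0} := by
        ext t
        simp only [hS, Set.mem_setOf_eq, ne_eq, hne, not_false_iff, true_and]
        rw [hG pr.1 t, hG pr.2 t]
        constructor <;> intro h <;> nlinarith [h]
      rw [hSeq]
      apply KMAux.quad_roots_finite
      rintro ⟨h1, h2, h3⟩
      apply hne
      have e1 : P pr.1 = P pr.2 := by linarith
      have e2 : Q pr.1 = Q pr.2 := by linarith
      have e3 : R pr.1 = R pr.2 := by linarith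
      rw [e1, e2, e3]
  have hUn := KMAux.ncard_iUnion_le S 2 (fun pr => (hSgood pr).1) (fun pr => (hSgood pr).2)
  have hDsub : D ⊆ ⋃ pr, S pr := by
    rintro t ⟨c, c', h1, h2⟩
    exact Set.mem_iUnion.mpr ⟨(c, c'), h1, h2⟩
  have hDfin : D.Finite := hUn.1.subset hDsub
  have hDcard : D.ncard ≤ Fintype.card ((Fin n → Fin k) × (Fin n → Fin k)) * 2 :=
    le_trans (Set.ncard_le_ncard hDsub hUn.1) hUn.2
  have hgcont : ∀ c : Fin n → Fin k, Continuous (KMAux.gfun n d k X i j c) := by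
    intro c
    have : KMAux.gfun n d k X i j c = fun t => (1 - P c) * t ^ 2 - 2 * Q c * t + R c :=
      funext (hG c)
    rw [this]
    fun_prop
  have hcont : ∀ t₀ ∉ D, ContinuousAt f t₀ := by
    intro t₀ ht₀
    set c₀ := cm t₀ with hc₀
    have hev : ∀ᶠ t in nhds t₀, ∀ c : Fin n → Fin k,
        KMAux.gfun n d k X i j c₀ t₀ < KMAux.gfun n d k X i j c t₀ →
          KMAux.gfun n d k X i j c₀ t < KMAux.gfun n d k X i j c t := by
      rw [Filter.eventually_all]
      intro c
      by_cases hc : KMAux.gfun n d k X i j c₀ t₀ < KMAux.gfun n d k X i j c t₀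
      · have hlt := ContinuousAt.eventually_lt ((hgcont c₀).continuousAt (x := t₀))
          ((hgcont c).continuousAt (x := t₀)) hc
        exact hlt.mono fun t h _ => h
      · exact Filter.Eventually.of_forall fun t h => absurd h hc
    have heq : ∀ᶠ t in nhds t₀, f t = P c₀ * t + Q c₀ := by
      filter_upwards [hev] with t ht
      have h1 : KMAux.gfun n d k X i j (cm t) t ≤ KMAux.gfun n d k X i j c₀ t := hmin t c₀
      have h2 : ¬ (KMAux.gfun n d k X i j c₀ t₀ < KMAux.gfun n d k X i j (cm t) t₀) :=
        fun hlt => absurd h1 (not_le.mpr (ht _ hlt))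
      have h3 : KMAux.gfun n d k X i j (cm t) t₀ = KMAux.gfun n d k X i j c₀ t₀ :=
        le_antisymm (not_lt.mp h2) (hmin t₀ (cm t))
      have hcc : (P (cm t), Q (cm t), R (cm t)) = (P c₀, Q c₀, R c₀) := by
        by_contra hne
        exact ht₀ ⟨cm t, c₀, hne, h3⟩
      have hP1 : P (cm t) = P c₀ := congrArg (fun x => x.1) hcc
      have hQ1 : Q (cm t) = Q c₀ := congrArg (fun x => x.2.1) hcc
      rw [hval t, hA (cm t) t, hP1, hQ1]
    have haff : ContinuousAt (fun t => P c₀ * t + Q c₀) t₀ := by fun_prop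
    have heq' : f =ᶠ[nhds t₀] (fun t => P c₀ * t + Q c₀) := heq
    exact haff.congr heq'.symm
  have hsub : {t : ℝ | ¬ ContinuousAt f t} ⊆ D := by
    intro t ht
    by_contra hDt
    exact ht (hcont t hDt)
  exact ⟨hDfin.subset hsub, le_trans (Set.ncard_le_ncard hsub hDfin) hDcard⟩
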